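/- Let G be a finite cyclic group of order n with generator e, let G0 ⊆ G contain e, and let x ∈ [1, n]. If min Δ(B(G0 ∪ {xe})) ≥ x, then min Δ(B(G0 ∪ {xe})) = min Δ(B(G0)). -/

import Mathlib

open Multiset

section Defs

variable {G : Type*} [AddCommGroup G]

/-- `S` is a zero-sum sequence over `G0`. -/
def IsZeroSumSeq (G0 : Set G) (S : Multiset G) : Prop :=
  (∀ g ∈ S, g ∈ G0) ∧ S.sum = 0

/-- `S` is a minimal zero-sum sequence over `G0`. -/
def IsMinZeroSum (G0 : Set G) (S : Multiset G) : Prop :=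
  S ≠ 0 ∧ IsZeroSumSeq G0 S ∧
    ∀ T : Multiset G, T ≤ S → T ≠ 0 → T ≠ S → T.sum ≠ 0

/-- The set of lengths of factorizations of `B` into minimal zero-sum sequences over `G0`. -/
def LengthSet (G0 : Set G) (B : Multiset G) : Set ℕ :=
  { k | ∃ F : Multiset (Multiset G), F.card = k ∧ (∀ A ∈ F, IsMinZeroSum G0 A) ∧ F.sum = B }

/-- The set of successive distances of a set of naturals. -/
def DeltaOf (L : Set ℕ) : Set ℕ :=
  { d | ∃ a ∈ L, ∃ b ∈ L, a < b ∧ b - a = d ∧ ∀ c ∈ L, ¬(a < c ∧ c < b) }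

/-- The set of distances of the monoid of zero-sum sequences over `G0`. -/
def DeltaB (G0 : Set G) : Set ℕ :=
  ⋃ B ∈ { B : Multiset G | IsZeroSumSeq G0 B }, DeltaOf (LengthSet G0 B)

/-- Minimal distance, with the convention `min ∅ = 0`. -/
noncomputable def minDelta (G0 : Set G) : ℕ := sInf (DeltaB G0)

/-- Cross number of a sequence. -/
noncomputable def crossNum (S : Multiset G) : ℚ :=
  (S.map fun g => (1 : ℚ) / (addOrderOf g : ℚ)).sum

/-- `G0` is weakly half-factorial. -/
def WeaklyHF (G0 : Set G) : Prop :=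
  ∀ A : Multiset G, IsMinZeroSum G0 A → ∃ m : ℕ, crossNum A = (m : ℚ)

/-- `G0` is half-factorial. -/
def HalfFactorial (G0 : Set G) : Prop :=
  ∀ B : Multiset G, IsZeroSumSeq G0 B →
    ∀ k ∈ LengthSet G0 B, ∀ l ∈ LengthSet G0 B, k = l

end Defs

section Helpers

variable {G : Type*} [AddCommGroup G]
set_option linter.unusedSectionVars false

lemma mem_le_sum {F : Multiset (Multiset G)} {A : Multiset G} (h : A ∈ F) : A ≤ F.sum := by
  obtain ⟨F', rfl⟩ := Multiset.exists_cons_of_mem h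
  rw [Multiset.sum_cons]
  exact Multiset.le_add_right _ _

lemma sum_le_sum_of_le {F F' : Multiset (Multiset G)} (h : F' ≤ F) : F'.sum ≤ F.sum := by
  obtain ⟨K, rfl⟩ := Multiset.le_iff_exists_add.mp h
  rw [Multiset.sum_add]
  exact Multiset.le_add_right _ _

lemma sum_sum_eq_zero {F : Multiset (Multiset G)} (h : ∀ A ∈ F, A.sum = 0) :
    (F.sum).sum = 0 := by
  induction F using Multiset.induction with
  | empty => simp
  | cons A F ih =>
    rw [Multiset.sum_cons, Multiset.sum_add, h A (mem_cons_self _ _),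
      ih (fun B hB => h B (mem_cons_of_mem hB)), add_zero]

lemma sum_ne_zero_of_props {F : Multiset (Multiset G)} (hF : F ≠ 0)
    (h : ∀ A ∈ F, A ≠ (0 : Multiset G)) : F.sum ≠ 0 := by
  obtain ⟨A, hA⟩ := Multiset.exists_mem_of_ne_zero hF
  intro h0
  have := mem_le_sum hA
  rw [h0, Multiset.le_zero] at this
  exact h A hA this

/-- every nonempty zero-sum sequence factors into minimal ones -/
lemma exists_factorization (G0 : Set G) (B : Multiset G) (hB0 : B ≠ 0)
    (hB : IsZeroSumSeq G0 B) :
    ∃ F : Multiset (Multiset G), (∀ A ∈ F, IsMinZeroSum G0 A) ∧ F.sum = B := by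
  induction B using Multiset.strongInductionOn with
  | ih B ih =>
  by_cases hmin : IsMinZeroSum G0 B
  · exact ⟨{B}, by simpa using hmin, by simp⟩
  · rw [IsMinZeroSum] at hmin
    push_neg at hmin
    obtain ⟨T, hTle, hT0, hTB, hTsum⟩ := hmin hB0 hB
    obtain ⟨U, hUadd⟩ := Multiset.le_iff_exists_add.mp hTle
    have hU0 : U ≠ 0 := by
      intro h; rw [h, add_zero] at hUadd; exact hTB hUadd.symm
    have hTlt : T < B := lt_of_le_of_ne hTle hTB
    have hUle : U ≤ B := hUadd ▸ Multiset.le_add_left _ _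
    have hUlt : U < B := by
      refine lt_of_le_of_ne hUle ?_
      intro h
      rw [h] at hUadd
      exact hT0 (right_eq_add.mp hUadd)
    have hTzs : IsZeroSumSeq G0 T :=
      ⟨fun g hg => hB.1 g (Multiset.mem_of_le hTle hg), hTsum⟩
    have hUzs : IsZeroSumSeq G0 U := by
      constructor
      · exact fun g hg => hB.1 g (Multiset.mem_of_le hUle hg)
      · have : T.sum + U.sum = B.sum := by rw [← Multiset.sum_add, ← hUadd]
        rw [hTsum, zero_add] at this
        rw [this, hB.2]
    obtain ⟨F1, hF1, hF1s⟩ := ih T hTlt hT0 hTzs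
    obtain ⟨F2, hF2, hF2s⟩ := ih U hUlt hU0 hUzs
    refine ⟨F1 + F2, ?_, ?_⟩
    · intro A hA
      rcases Multiset.mem_add.mp hA with h | h
      · exact hF1 A h
      · exact hF2 A h
    · rw [Multiset.sum_add, hF1s, hF2s, ← hUadd]

lemma exists_delta_of_pair {L : Set ℕ} :
    ∀ k a b : ℕ, a ∈ L → b ∈ L → a < b → b - a ≤ k →
      ∃ δ ∈ DeltaOf L, 0 < δ ∧ δ ≤ b - a := by
  intro k
  induction k with
  | zero => intro a b _ _ hab hk; omega
  | succ k ih =>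
    intro a b ha hb hab hk
    by_cases hc : ∃ c ∈ L, a < c ∧ c < b
    · obtain ⟨c, hcL, hac, hcb⟩ := hc
      obtain ⟨δ, hδ, hδ0, hδle⟩ := ih a c ha hcL hac (by omega)
      exact ⟨δ, hδ, hδ0, by omega⟩
    · push_neg at hc
      exact ⟨b - a, ⟨a, ha, b, hb, hab, rfl, fun c hcL => by
        intro ⟨h1, h2⟩; exact absurd h2 (not_lt.mpr (hc c hcL h1))⟩, by omega, le_refl _⟩

lemma isMinZeroSum_mono {G0 G1 : Set G} (h01 : G0 ⊆ G1) {A : Multiset G}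
    (hA : IsMinZeroSum G0 A) : IsMinZeroSum G1 A :=
  ⟨hA.1, ⟨fun g hg => h01 (hA.2.1.1 g hg), hA.2.1.2⟩, hA.2.2⟩

lemma isMinZeroSum_restrict {G0 G1 : Set G} {A : Multiset G}
    (hA : IsMinZeroSum G1 A) (hmem : ∀ g ∈ A, g ∈ G0) : IsMinZeroSum G0 A :=
  ⟨hA.1, ⟨hmem, hA.2.1.2⟩, hA.2.2⟩

lemma lengthSet_eq_of_subset {G0 G1 : Set G} (h01 : G0 ⊆ G1) {B : Multiset G}
    (hB : ∀ g ∈ B, g ∈ G0) : LengthSet G1 B = LengthSet G0 B := by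
  ext k
  constructor
  · rintro ⟨F, hcard, hmin, hsum⟩
    refine ⟨F, hcard, fun A hA => ?_, hsum⟩
    refine isMinZeroSum_restrict (hmin A hA) (fun g hg => ?_)
    exact hB g (Multiset.mem_of_le (hsum ▸ mem_le_sum hA) hg)
  · rintro ⟨F, hcard, hmin, hsum⟩
    exact ⟨F, hcard, fun A hA => isMinZeroSum_mono h01 (hmin A hA), hsum⟩

lemma deltaB_subset {G0 G1 : Set G} (h01 : G0 ⊆ G1) : DeltaB G0 ⊆ DeltaB G1 := by
  intro δ hδ
  rw [DeltaB, Set.mem_iUnion₂] at hδ ⊢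
  obtain ⟨B, hB, hδ⟩ := hδ
  refine ⟨B, ⟨fun g hg => h01 (hB.1 g hg), hB.2⟩, ?_⟩
  rwa [lengthSet_eq_of_subset h01 hB.1]

end Helpers

section Chunk2

variable {G : Type*} [AddCommGroup G] [DecidableEq G]
set_option linter.unusedSectionVars false

lemma replicate_ne_zero {e : G} {n : ℕ} (hn : 0 < n) : replicate n e ≠ 0 := by
  rw [Ne, ← Multiset.card_eq_zero, Multiset.card_replicate]
  omega

/-- `e^n` is an atom. -/
lemma replicate_atom {G' : Set G} {e : G} {n : ℕ} (he : addOrderOf e = n) (hn : 0 < n)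
    (heG : e ∈ G') : IsMinZeroSum G' (replicate n e) := by
  refine ⟨replicate_ne_zero hn, ⟨?_, ?_⟩, ?_⟩
  · intro g hg; rw [Multiset.eq_of_mem_replicate hg]; exact heG
  · rw [Multiset.sum_replicate, ← he, addOrderOf_nsmul_eq_zero]
  · intro T hTle hT0 hTne
    have hTrep : T = replicate T.card e :=
      (Multiset.eq_replicate_card).mpr (fun b hb =>
        Multiset.eq_of_mem_replicate (Multiset.mem_of_le hTle hb))
    have hcard : T.card ≤ n := by
      simpa using Multiset.card_le_card hTle
    have hcardlt : T.card < n := by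
      rcases lt_or_eq_of_le hcard with h | h
      · exact h
      · exact absurd (by rw [hTrep, h]) hTne
    have hcard0 : 0 < T.card := by
      rcases Nat.eq_zero_or_pos T.card with h | h
      · exact absurd (by rw [hTrep, h, Multiset.replicate_zero]) hT0
      · exact h
    rw [hTrep, Multiset.sum_replicate]
    intro h0
    have := (addOrderOf_dvd_iff_nsmul_eq_zero).mpr h0
    rw [he] at this
    exact absurd (Nat.le_of_dvd hcard0 this) (not_le.mpr hcardlt)

/-- a multiset supported on `{g, e}` is determined by its two counts -/
lemma eq_rep_two {g e : G} (hge : g ≠ e) {T : Multiset G}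
    (hT : ∀ b ∈ T, b = g ∨ b = e) :
    T = replicate (T.count g) g + replicate (T.count e) e := by
  ext b
  rw [Multiset.count_add, Multiset.count_replicate, Multiset.count_replicate]
  by_cases hbg : b = g
  · rw [if_pos hbg.symm, if_neg (fun h : e = b => hge ((h.trans hbg).symm)), add_zero, hbg]
  · by_cases hbe : b = e
    · rw [if_neg (fun h : g = b => hge (h.trans hbe)), if_pos hbe.symm, zero_add, hbe]
    · rw [if_neg (fun h : g = b => hbg h.symm), if_neg (fun h : e = b => hbe h.symm),
        add_zero, Multiset.count_eq_zero]
      intro hb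
      rcases hT b hb with h | h
      · exact hbg h
      · exact hbe h

/-- `g·e^{n-x}` is an atom, where `g = x•e`. -/
lemma U_atom {G' : Set G} {e g : G} {n x : ℕ} (he : addOrderOf e = n)
    (hg : g = x • e) (hx1 : 1 ≤ x) (hxn : x ≤ n) (hge : g ≠ e)
    (hgG : g ∈ G') (heG : e ∈ G') :
    IsMinZeroSum G' (g ::ₘ replicate (n - x) e) := by
  refine ⟨by simp, ⟨?_, ?_⟩, ?_⟩
  · intro b hb
    rcases Multiset.mem_cons.mp hb with h | h
    · subst h; exact hgG
    · rw [Multiset.eq_of_mem_replicate h]; exact heG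
  · rw [Multiset.sum_cons, Multiset.sum_replicate, hg, ← add_nsmul,
      Nat.add_sub_cancel' hxn, ← he, addOrderOf_nsmul_eq_zero]
  · intro T hTle hT0 hTne
    have hmem : ∀ b ∈ T, b = g ∨ b = e := by
      intro b hb
      have := Multiset.mem_of_le hTle hb
      rcases Multiset.mem_cons.mp this with h | h
      · exact Or.inl h
      · exact Or.inr (Multiset.eq_of_mem_replicate h)
    have hile : T.count g ≤ 1 := by
      have := Multiset.count_le_of_le g hTle
      simpa [Multiset.count_replicate, hge, Ne.symm hge] using this
    have hlle : T.count e ≤ n - x := by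
      have := Multiset.count_le_of_le e hTle
      simpa [Multiset.count_replicate, hge, Ne.symm hge] using this
    have hTrep := eq_rep_two hge hmem
    rcases Nat.le_one_iff_eq_zero_or_eq_one.mp hile with h1 | h1
    · -- no g: T = e^l with 0 < l ≤ n - x < n
      rw [h1, Multiset.replicate_zero, zero_add] at hTrep
      rw [hTrep, Multiset.sum_replicate]
      intro h0
      have hdvd : n ∣ T.count e := by
        rw [← he]; exact (addOrderOf_dvd_iff_nsmul_eq_zero).mpr h0
      have hpos : 0 < T.count e := by
        rcases Nat.eq_zero_or_pos (T.count e) with h | h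
        · rw [h, Multiset.replicate_zero] at hTrep; exact absurd hTrep hT0
        · exact h
      have := Nat.le_of_dvd hpos hdvd
      omega
    · -- one g
      rw [h1, Multiset.replicate_one, Multiset.singleton_add] at hTrep
      rw [hTrep, Multiset.sum_cons, Multiset.sum_replicate, hg, ← add_nsmul]
      intro h0
      have hdvd : n ∣ x + T.count e := by
        rw [← he]; exact (addOrderOf_dvd_iff_nsmul_eq_zero).mpr h0
      have := Nat.le_of_dvd (by omega) hdvd
      have hln : T.count e = n - x := by omega
      rw [hln] at hTrep
      exact hTne hTrep

end Chunk2

section Chunk3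

variable {G : Type*} [AddCommGroup G] [DecidableEq G]
set_option linter.unusedSectionVars false

/-- replace every copy of `g` by `x` copies of `e` -/
def phiMap (g e : G) (x : ℕ) (S : Multiset G) : Multiset G :=
  S.filter (· ≠ g) + replicate (S.count g * x) e

variable {g e : G} {x : ℕ} {S : Multiset G}

lemma count_phi_e (hge : g ≠ e) (S : Multiset G) :
    (phiMap g e x S).count e = S.count e + S.count g * x := by
  rw [phiMap, Multiset.count_add, Multiset.count_filter, if_pos (Ne.symm hge),
    Multiset.count_replicate, if_pos rfl]

lemma count_phi_g (hge : g ≠ e) (S : Multiset G) : (phiMap g e x S).count g = 0 := by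
  rw [phiMap, Multiset.count_add, Multiset.count_filter, if_neg (by simp),
    Multiset.count_replicate, if_neg (Ne.symm hge)]

lemma count_phi_other {b : G} (hbg : b ≠ g) (hbe : b ≠ e) (S : Multiset G) :
    (phiMap g e x S).count b = S.count b := by
  rw [phiMap, Multiset.count_add, Multiset.count_filter, if_pos hbg,
    Multiset.count_replicate, if_neg (Ne.symm hbe), add_zero]

lemma filter_eq_split (e : G) (D : Multiset G) :
    D = D.filter (· ≠ e) + replicate (D.count e) e := by
  have h1 := Multiset.filter_add_not (· ≠ e) D
  have h2 : D.filter (fun a => ¬ a ≠ e) = D.filter (· = e) :=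
    Multiset.filter_congr (fun a _ => by simp)
  rw [h2, Multiset.filter_eq'] at h1
  exact h1.symm

lemma phi_sum (hg : g = x • e) (S : Multiset G) : (phiMap g e x S).sum = S.sum := by
  conv_rhs => rw [filter_eq_split g S]
  rw [phiMap, Multiset.sum_add, Multiset.sum_add, Multiset.sum_replicate,
    Multiset.sum_replicate, hg]
  congr 1
  rw [mul_comm, mul_nsmul]

lemma phi_zero : phiMap g e x (0 : Multiset G) = 0 := by simp [phiMap]

lemma phi_add (A B : Multiset G) :
    phiMap g e x (A + B) = phiMap g e x A + phiMap g e x B := by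
  rw [phiMap, phiMap, phiMap, Multiset.filter_add, Multiset.count_add, add_mul,
    Multiset.replicate_add, add_add_add_comm]

lemma sum_map_phi (F : Multiset (Multiset G)) :
    (F.map (phiMap g e x)).sum = phiMap g e x F.sum := by
  induction F using Multiset.induction with
  | empty => simp [phi_zero]
  | cons A F ih => rw [Multiset.map_cons, Multiset.sum_cons, Multiset.sum_cons, phi_add, ih]

lemma phi_mem {G0 : Set G} (heG : e ∈ G0) (hS : ∀ b ∈ S, b ∈ G0 ∪ {g}) :
    ∀ b ∈ phiMap g e x S, b ∈ G0 := by
  intro b hb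
  rcases Multiset.mem_add.mp hb with h | h
  · have hbS := Multiset.mem_filter.mp h
    rcases hS b hbS.1 with h' | h'
    · exact h'
    · exact absurd h' hbS.2
  · rw [Multiset.eq_of_mem_replicate h]; exact heG

lemma phi_ne_zero (hm : 1 ≤ S.count g) (hx : 1 ≤ x) : phiMap g e x S ≠ 0 := by
  intro h
  have hcard := congrArg Multiset.card h
  rw [phiMap, Multiset.card_add, Multiset.card_replicate, Multiset.card_zero] at hcard
  have h0 : S.count g * x = 0 := Nat.eq_zero_of_add_eq_zero_left hcard
  rcases Nat.mul_eq_zero.mp h0 with h' | h' <;> omega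

/-- The pullback lemma: a proper zero-sum subsequence of `phi S` whose number of `e`'s
is ≡ (≤ count e S) mod x pulls back to a proper zero-sum subsequence of `S`. -/
lemma pullback (hge : g ≠ e) (hg : g = x • e) (hx : 1 ≤ x) {D : Multiset G}
    (hDle : D ≤ phiMap g e x S) (hDsum : D.sum = 0) (hD0 : D ≠ 0)
    (hDne : D ≠ phiMap g e x S) (hjx : D.count e % x ≤ S.count e) :
    ∃ D' : Multiset G, D' ≤ S ∧ D' ≠ 0 ∧ D' ≠ S ∧ D'.sum = 0 := by
  set j := D.count e with hj
  set m := S.count g with hm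
  set c := S.count e with hc
  have hjle : j ≤ c + m * x := by
    have := Multiset.count_le_of_le e hDle
    rwa [count_phi_e hge] at this
  -- choose i, c'
  obtain ⟨i, c', hile, hc'le, hsplit⟩ :
      ∃ i c' : ℕ, i ≤ m ∧ c' ≤ c ∧ c' + i * x = j := by
    by_cases hcase : j / x ≤ m
    · refine ⟨j / x, j % x, hcase, hjx, Nat.mod_add_div' j x⟩
    · have hmj : m ≤ j / x := le_of_lt (Nat.not_le.mp hcase)
      have hmx : m * x ≤ j :=
        le_trans (Nat.mul_le_mul_right x hmj) (Nat.div_mul_le_self j x)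
      exact ⟨m, j - m * x, le_refl m, Nat.sub_le_iff_le_add.mpr hjle,
        Nat.sub_add_cancel hmx⟩
  set D' : Multiset G := D.filter (· ≠ e) + replicate c' e + replicate i g with hD'
  have hcount_e : D'.count e = c' := by
    simp [hD', Multiset.count_filter, Multiset.count_replicate, hge, Ne.symm hge]
  have hcount_g : D'.count g = i := by
    have hDg : D.count g = 0 := by
      have := Multiset.count_le_of_le g hDle
      rw [count_phi_g hge] at this
      omega
    simp [hD', Multiset.count_filter, Multiset.count_replicate, hge, Ne.symm hge, hDg]
  have hcount_other : ∀ b : G, b ≠ g → b ≠ e → D'.count b = D.count b := by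
    intro b hbg hbe
    simp [hD', Multiset.count_filter, Multiset.count_replicate, hbg, hbe,
      Ne.symm hbg, Ne.symm hbe]
  refine ⟨D', ?_, ?_, ?_, ?_⟩
  · rw [Multiset.le_iff_count]
    intro b
    by_cases hbe : b = e
    · rw [hbe, hcount_e]; exact hc'le
    · by_cases hbg : b = g
      · rw [hbg, hcount_g]; exact hile
      · rw [hcount_other b hbg hbe]
        have := Multiset.count_le_of_le b hDle
        rwa [count_phi_other hbg hbe] at this
  · intro h0
    have hcard := congrArg Multiset.card h0
    simp only [hD', Multiset.card_add, Multiset.card_replicate, Multiset.card_zero] at hcard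
    have hfil : Multiset.card (D.filter (· ≠ e)) = 0 := by omega
    have hc'0 : c' = 0 := by omega
    have hi0 : i = 0 := by omega
    have hj0 : j = 0 := by rw [← hsplit, hc'0, hi0, zero_mul, add_zero]
    have hDsplit := filter_eq_split e D
    rw [← hj, hj0, Multiset.replicate_zero, add_zero, Multiset.card_eq_zero.mp hfil] at hDsplit
    exact hD0 hDsplit
  · intro hDS
    apply hDne
    ext b
    by_cases hbe : b = e
    · have h1 : D'.count e = c := by rw [hDS]
      have h2 : D'.count g = m := by rw [hDS]
      rw [hcount_e] at h1
      rw [hcount_g] at h2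
      rw [hbe, count_phi_e hge, ← hc, ← hm, ← hj, ← hsplit, h1, h2]
    · by_cases hbg : b = g
      · rw [hbg, count_phi_g hge]
        have := Multiset.count_le_of_le g hDle
        rw [count_phi_g hge] at this
        omega
      · rw [count_phi_other hbg hbe, ← hcount_other b hbg hbe, hDS]
  · -- sum
    have hDsplit := filter_eq_split e D
    have hsumD : (D.filter (· ≠ e)).sum + j • e = 0 := by
      rw [← hDsum]
      conv_rhs => rw [hDsplit]
      rw [Multiset.sum_add, Multiset.sum_replicate]
    have : D'.sum = (D.filter (· ≠ e)).sum + c' • e + i • g := by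
      rw [hD', Multiset.sum_add, Multiset.sum_add, Multiset.sum_replicate,
        Multiset.sum_replicate]
    rw [this, hg, ← mul_nsmul, add_assoc, ← add_nsmul]
    rw [mul_comm i x] at hsplit
    rw [hsplit]
    exact hsumD

end Chunk3

section Chunk4

variable {G : Type*} [AddCommGroup G] [DecidableEq G]
set_option linter.unusedSectionVars false
set_option maxHeartbeats 1000000

/-- CLAIM B: the image under `phiMap` of an atom over `G0 ∪ {g}` is an atom over `G0`. -/
lemma claimB {G0 : Set G} {e g : G} {n x : ℕ}
    (he : addOrderOf e = n) (hg : g = x • e) (hx1 : 1 ≤ x) (hxn : x ≤ n)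
    (heG : e ∈ G0) (hgG0 : g ∉ G0)
    (hd : ∀ δ ∈ DeltaB (G0 ∪ {g}), x ≤ δ)
    {S : Multiset G} (hS : IsMinZeroSum (G0 ∪ {g}) S) :
    IsMinZeroSum G0 (phiMap g e x S) := by
  have hge : g ≠ e := fun h => hgG0 (h ▸ heG)
  have hn : 0 < n := lt_of_lt_of_le hx1 hxn
  rcases Nat.eq_zero_or_pos (S.count g) with hm0 | hm1
  · -- no g in S : phi S = S
    have hgS : g ∉ S := by rw [← Multiset.count_eq_zero]; exact hm0
    have hphiS : phiMap g e x S = S := by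
      rw [phiMap, hm0, zero_mul, Multiset.replicate_zero, add_zero,
        Multiset.filter_eq_self]
      intro b hb h
      exact hgS (h ▸ hb)
    rw [hphiS]
    refine isMinZeroSum_restrict hS (fun b hb => ?_)
    rcases hS.2.1.1 b hb with h | h
    · exact h
    · exact absurd (h ▸ hb) hgS
  · -- m ≥ 1
    have hphi0 : phiMap g e x S ≠ 0 := phi_ne_zero hm1 hx1
    have hphizs : IsZeroSumSeq G0 (phiMap g e x S) :=
      ⟨phi_mem heG hS.2.1.1, (phi_sum hg S).trans hS.2.1.2⟩
    obtain ⟨F, hF, hFsum⟩ := exists_factorization G0 (phiMap g e x S) hphi0 hphizs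
    -- no proper nonempty subfamily has e-count divisible by x
    have hkey : ∀ F' : Multiset (Multiset G), F' ≤ F → F' ≠ 0 → F' ≠ F →
        ¬ (x ∣ (F'.sum).count e) := by
      intro F' hF'le hF'0 hF'ne hdvd
      have hDle : F'.sum ≤ phiMap g e x S := hFsum ▸ sum_le_sum_of_le hF'le
      have hD0 : F'.sum ≠ 0 :=
        sum_ne_zero_of_props hF'0 (fun A hA => (hF A (Multiset.mem_of_le hF'le hA)).1)
      have hDsum : (F'.sum).sum = 0 :=
        sum_sum_eq_zero (fun A hA => (hF A (Multiset.mem_of_le hF'le hA)).2.1.2)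
      have hDne : F'.sum ≠ phiMap g e x S := by
        obtain ⟨K, hK⟩ := Multiset.le_iff_exists_add.mp hF'le
        have hK0 : K ≠ 0 := by
          intro h; rw [h, add_zero] at hK; exact hF'ne hK.symm
        have hKsum : K.sum ≠ 0 :=
          sum_ne_zero_of_props hK0
            (fun A hA => (hF A (hK ▸ Multiset.mem_add.mpr (Or.inr hA))).1)
        intro hEq
        have h2 : phiMap g e x S = F'.sum + K.sum := by
          rw [← Multiset.sum_add, ← hK, hFsum]
        rw [hEq] at h2
        exact hKsum (left_eq_add.mp h2)
      have hjx : (F'.sum).count e % x ≤ S.count e :=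
        le_trans (le_of_eq (Nat.mod_eq_zero_of_dvd hdvd)) (Nat.zero_le _)
      obtain ⟨D', hD'le, hD'0, hD'ne, hD'sum⟩ :=
        pullback hge hg hx1 hDle hDsum hD0 hDne hjx
      exact hS.2.2 D' hD'le hD'0 hD'ne hD'sum
    -- pigeonhole: F.card ≤ x
    have htx : F.card ≤ x := by
      by_contra hxt
      push_neg at hxt
      haveI : NeZero x := ⟨by omega⟩
      set l : List (Multiset G) := F.toList with hl
      have hlF : (l : Multiset (Multiset G)) = F := Multiset.coe_toList F
      have hlen : l.length = F.card := Multiset.length_toList F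
      have key2 : ∀ a b : ℕ, a < b → b < F.card →
          ((((l.take a).sum.count e : ℕ) : ZMod x) = (((l.take b).sum.count e : ℕ) : ZMod x))
          → False := by
        intro a b hab hbcard hcast
        set L' : List (Multiset G) := (l.take b).drop a with hL'
        have hsubl : List.Sublist L' l :=
          List.Sublist.trans (List.drop_sublist ..) (List.take_sublist ..)
        have hF'le : (L' : Multiset (Multiset G)) ≤ F := by
          rw [← hlF]
          exact Multiset.coe_le.mpr hsubl.subperm
        have hlenL' : L'.length = b - a := by
          rw [hL', List.length_drop, List.length_take, min_eq_left (by omega)]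
        have htake : l.take b = l.take a ++ L' := by
          have h1 := List.take_append_drop a (l.take b)
          rw [List.take_take, min_eq_left (le_of_lt hab)] at h1
          exact h1.symm
        have hsplitcnt : (l.take b).sum.count e
            = (l.take a).sum.count e + L'.sum.count e := by
          rw [htake, List.sum_append, Multiset.count_add]
        rw [hsplitcnt, Nat.cast_add] at hcast
        have hzero : ((L'.sum.count e : ℕ) : ZMod x) = 0 := (left_eq_add.mp hcast)
        have hdvd : x ∣ L'.sum.count e := (ZMod.natCast_eq_zero_iff _ x).mp hzero
        have hF'0 : (L' : Multiset (Multiset G)) ≠ 0 := by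
          intro h
          have := congrArg Multiset.card h
          rw [Multiset.coe_card, hlenL'] at this
          simp at this
          omega
        have hF'ne : (L' : Multiset (Multiset G)) ≠ F := by
          intro h
          have := congrArg Multiset.card h
          rw [Multiset.coe_card, hlenL'] at this
          omega
        refine hkey _ hF'le hF'0 hF'ne ?_
        rwa [Multiset.sum_coe]
      -- apply pigeonhole
      have hcard : Fintype.card (ZMod x) < Fintype.card (Fin F.card) := by
        rw [ZMod.card, Fintype.card_fin]; exact hxt
      obtain ⟨a, b, hab, hfab⟩ := Fintype.exists_ne_map_eq_of_card_lt
        (fun k : Fin F.card => (((l.take (k : ℕ)).sum.count e : ℕ) : ZMod x)) hcard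
      rcases lt_trichotomy (a : ℕ) (b : ℕ) with h | h | h
      · exact key2 a b h b.isLt hfab
      · exact hab (Fin.ext h)
      · exact key2 b a h a.isLt hfab.symm
    -- now F.card = 1 or 2 ≤ F.card ≤ x : the latter contradicts min Δ ≥ x
    have hFcard1 : F.card = 1 := by
      have hFcard0 : F.card ≠ 0 := by
        intro h
        rw [Multiset.card_eq_zero] at h
        rw [h, Multiset.sum_zero] at hFsum
        exact hphi0 hFsum.symm
      by_contra hne1
      have ht2 : 2 ≤ F.card := by omega
      -- the sequence C = S + e^{m n} has factorizations of lengths m+1 and m+F.card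
      set C : Multiset G := S + replicate (S.count g * n) e with hC
      have hne0 : n • e = 0 := by rw [← he]; exact addOrderOf_nsmul_eq_zero e
      have hCzs : IsZeroSumSeq (G0 ∪ {g}) C := by
        constructor
        · intro b hb
          rcases Multiset.mem_add.mp hb with h | h
          · exact hS.2.1.1 b h
          · rw [Multiset.eq_of_mem_replicate h]; exact Set.mem_union_left _ heG
        · rw [hC, Multiset.sum_add, hS.2.1.2, Multiset.sum_replicate, zero_add,
            mul_comm, mul_nsmul, hne0, smul_zero]
      have hlen1 : (S.count g) + 1 ∈ LengthSet (G0 ∪ {g}) C := by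
        refine ⟨S ::ₘ replicate (S.count g) (replicate n e), ?_, ?_, ?_⟩
        · rw [Multiset.card_cons, Multiset.card_replicate]
        · intro A hA
          rcases Multiset.mem_cons.mp hA with h | h
          · exact h ▸ hS
          · rw [Multiset.eq_of_mem_replicate h]
            exact replicate_atom he hn (Set.mem_union_left _ heG)
        · rw [Multiset.sum_cons, Multiset.sum_replicate, Multiset.nsmul_replicate, hC]
      have hlen2 : F.card + S.count g ∈ LengthSet (G0 ∪ {g}) C := by
        refine ⟨F + replicate (S.count g) (g ::ₘ replicate (n - x) e), ?_, ?_, ?_⟩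
        · rw [Multiset.card_add, Multiset.card_replicate]
        · intro A hA
          rcases Multiset.mem_add.mp hA with h | h
          · exact isMinZeroSum_mono Set.subset_union_left (hF A h)
          · rw [Multiset.eq_of_mem_replicate h]
            exact U_atom he hg hx1 hxn hge (Set.mem_union_right _ rfl)
              (Set.mem_union_left _ heG)
        · rw [Multiset.sum_add, hFsum, Multiset.sum_replicate, hC]
          ext b
          rw [Multiset.count_add, Multiset.count_add, Multiset.count_nsmul,
            Multiset.count_cons, Multiset.count_replicate, Multiset.count_replicate]
          by_cases hbe : b = e
          · rw [hbe, count_phi_e hge, if_pos rfl, if_pos rfl, if_neg (Ne.symm hge), add_zero,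
              add_assoc, ← Nat.mul_add, Nat.add_sub_cancel' hxn]
          · by_cases hbg : b = g
            · rw [hbg, count_phi_g hge, if_neg (Ne.symm hge), if_pos rfl,
                if_neg (Ne.symm hge)]
              simp
            · rw [count_phi_other hbg hbe, if_neg (Ne.symm hbe), if_neg hbg,
                if_neg (Ne.symm hbe)]
              simp
      -- two lengths at distance F.card - 1 < x : contradiction
      obtain ⟨δ, hδmem, hδ0, hδle⟩ := exists_delta_of_pair
        ((F.card + S.count g) - (S.count g + 1)) (S.count g + 1) (F.card + S.count g)
        hlen1 hlen2 (by omega) (le_refl _)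
      have hδB : δ ∈ DeltaB (G0 ∪ {g}) := by
        rw [DeltaB, Set.mem_iUnion₂]
        exact ⟨C, hCzs, hδmem⟩
      have := hd δ hδB
      omega
    obtain ⟨A, hA⟩ := Multiset.card_eq_one.mp hFcard1
    have : A = phiMap g e x S := by rw [← hFsum, hA, Multiset.sum_singleton]
    rw [← this]
    exact hF A (by rw [hA]; exact Multiset.mem_singleton_self A)

end Chunk4

/-- If `e ∈ G0` is a generator and `x ∈ [1,n]` with
`min Δ(B(G0 ∪ {x•e})) ≥ x`, then `min Δ(B(G0 ∪ {x•e})) = min Δ(B(G0))`. -/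
theorem stmt_10 {G : Type*} [AddCommGroup G] [Fintype G] (n : ℕ)
    (hcard : Fintype.card G = n) (e : G) (he : addOrderOf e = n)
    (G0 : Set G) (heG : e ∈ G0)
    (x : ℕ) (hx1 : 1 ≤ x) (hxn : x ≤ n)
    (hge : x ≤ minDelta (G0 ∪ {x • e})) :
    minDelta (G0 ∪ {x • e}) = minDelta G0 := by
  classical
  by_cases hxe : x • e ∈ G0
  · rw [Set.union_singleton, Set.insert_eq_self.mpr hxe]
  · set g : G := x • e with hgdef
    have h1 : 1 ≤ minDelta (G0 ∪ {g}) := le_trans hx1 hge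
    have hne : (DeltaB (G0 ∪ {g})).Nonempty := by
      by_contra h
      rw [Set.not_nonempty_iff_eq_empty] at h
      rw [minDelta, h, Nat.sInf_empty] at h1
      omega
    have hdmem : minDelta (G0 ∪ {g}) ∈ DeltaB (G0 ∪ {g}) := Nat.sInf_mem hne
    have hdlb : ∀ δ ∈ DeltaB (G0 ∪ {g}), minDelta (G0 ∪ {g}) ≤ δ :=
      fun δ hδ => Nat.sInf_le hδ
    have hdx : ∀ δ ∈ DeltaB (G0 ∪ {g}), x ≤ δ := fun δ hδ => le_trans hge (hdlb δ hδ)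
    rw [DeltaB, Set.mem_iUnion₂] at hdmem
    obtain ⟨B, hBzs, hdOf⟩ := hdmem
    rw [Set.mem_setOf_eq] at hBzs
    obtain ⟨a, haL, b, hbL, hab, hba, _hadj⟩ := hdOf
    have htrans : ∀ k ∈ LengthSet (G0 ∪ {g}) B, k ∈ LengthSet G0 (phiMap g e x B) := by
      rintro k ⟨F, hFcard, hFmin, hFsum⟩
      refine ⟨F.map (phiMap g e x), by rw [Multiset.card_map, hFcard], ?_, ?_⟩
      · intro A hA
        obtain ⟨A₀, hA₀, rfl⟩ := Multiset.mem_map.mp hA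
        exact claimB he hgdef hx1 hxn heG hxe hdx (hFmin A₀ hA₀)
      · rw [sum_map_phi, hFsum]
    have hphiBzs : IsZeroSumSeq G0 (phiMap g e x B) :=
      ⟨phi_mem heG hBzs.1, (phi_sum hgdef B).trans hBzs.2⟩
    obtain ⟨δ, hδmem, hδ0, hδle⟩ :=
      exists_delta_of_pair (b - a) a b (htrans a haL) (htrans b hbL) hab (le_refl _)
    have hδG0 : δ ∈ DeltaB G0 := by
      rw [DeltaB, Set.mem_iUnion₂]
      exact ⟨phiMap g e x B, hphiBzs, hδmem⟩
    have hδG1 : δ ∈ DeltaB (G0 ∪ {g}) := deltaB_subset Set.subset_union_left hδG0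
    have hδd : δ = minDelta (G0 ∪ {g}) := le_antisymm (hba ▸ hδle) (hdlb δ hδG1)
    have hdinG0 : minDelta (G0 ∪ {g}) ∈ DeltaB G0 := hδd ▸ hδG0
    have hG0ne : (DeltaB G0).Nonempty := ⟨_, hdinG0⟩
    have hle1 : minDelta G0 ≤ minDelta (G0 ∪ {g}) := Nat.sInf_le hdinG0
    have hle2 : minDelta (G0 ∪ {g}) ≤ minDelta G0 :=
      hdlb _ (deltaB_subset Set.subset_union_left (Nat.sInf_mem hG0ne))
    exact le_antisymm hle2 hle1
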